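/- arXiv:2508.20923 — 3 statements merged into one kernel-verified Lean document; each statement's English description precedes it below -/
import Mathlib

section
/- Deterministic bad-round bound for combinatorial UCB (core of Proposition 2 on the event that all confidence bounds hold). Let m ≤ n be positive integers, c > 0, Δ > 0, and let 𝒮 be a nonempty family of subsets of {1,…,m}, each of cardinality at most m. For each round t ∈ {1,…,n} let g_t : {1,…,m} → ℝ, let S*_t ∈ argmax_{S∈𝒮} ∑_{i∈S} g_t(i), and suppose selections S_t ∈ 𝒮 are made so that every arm is played at least once during the first m rounds, and for every t > m: (a) the indices u_t satisfy g_t(i) ≤ u_t(i) ≤ g_t(i) + 2c·√(log t / T_{i,t−1}) for all i, where T_{i,t} = #{s ≤ t : i ∈ S_s}; (b) S_t ∈ argmax_{S∈𝒮} ∑_{i∈S} u_t(i); and (c) every S ∈ 𝒮 with ∑_{i∈S} g_t(i) < ∑_{i∈S*_t} g_t(i) satisfies ∑_{i∈S*_t} g_t(i) − ∑_{i∈S} g_t(i) ≥ Δ. Then the number of bad rounds, i.e., rounds t ∈ {m+1,…,n} with ∑_{i∈S_t} g_t(i) < ∑_{i∈S*_t} g_t(i), is at most m·(4m²c²·log(n)/Δ²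 + 1). -/
open scoped Classical

/-- **Deterministic bad-round bound for combinatorial UCB (core of Proposition 2).**
If every arm is played once during the first `m` rounds, the UCB indices are valid with
confidence radii `2c√(log t / T_{i,t-1})`, the algorithm maximizes the total index over the
family `𝒮`, and every suboptimal super-arm has gap at least `Δ`, then the number of bad
rounds among `t ∈ {m+1,…,n}` is at most `m * (4 m² c² log n / Δ² + 1)`. -/
theorem cobrah_sb_bad_rounds_bound
    (m n : ℕ) (hm : 0 < m) (hmn : m ≤ n)
    (c Δ : ℝ) (hc : 0 < c) (hΔ : 0 < Δ)
    (𝒮 : Finset (Finset (Fin m))) (h𝒮 : 𝒮.Nonempty)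
    (hcard : ∀ S ∈ 𝒮, S.card ≤ m)
    (g u : ℕ → Fin m → ℝ)
    (Sstar Ssel : ℕ → Finset (Fin m))
    (hstar_mem : ∀ t, Sstar t ∈ 𝒮)
    (hstar_opt : ∀ t, ∀ S ∈ 𝒮, ∑ i ∈ S, g t i ≤ ∑ i ∈ Sstar t, g t i)
    (hsel_mem : ∀ t, Ssel t ∈ 𝒮)
    (hinit : ∀ i : Fin m, ∃ s, 1 ≤ s ∧ s ≤ m ∧ i ∈ Ssel s)
    (hconf : ∀ t, m < t → t ≤ n → ∀ i : Fin m,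
      g t i ≤ u t i ∧
        u t i ≤ g t i + 2 * c * Real.sqrt (Real.log t /
          (((Finset.Icc 1 (t - 1)).filter (fun s => i ∈ Ssel s)).card : ℝ)))
    (hargmax : ∀ t, m < t → t ≤ n → ∀ S ∈ 𝒮, ∑ i ∈ S, u t i ≤ ∑ i ∈ Ssel t, u t i)
    (hgap : ∀ t, m < t → t ≤ n → ∀ S ∈ 𝒮,
      ∑ i ∈ S, g t i < ∑ i ∈ Sstar t, g t i →
        Δ ≤ ∑ i ∈ Sstar t, g t i - ∑ i ∈ S, g t i) :
    (((Finset.Icc (m + 1) n).filter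
        (fun t => ∑ i ∈ Ssel t, g t i < ∑ i ∈ Sstar t, g t i)).card : ℝ)
      ≤ m * (4 * m ^ 2 * c ^ 2 * Real.log n / Δ ^ 2 + 1) := by
  classical
  set L : ℝ := 4 * m ^ 2 * c ^ 2 * Real.log n / Δ ^ 2 with hLdef
  have hmR : (0:ℝ) < m := by exact_mod_cast hm
  have hn1 : (1:ℝ) ≤ (n:ℝ) := by exact_mod_cast hm.trans_le hmn
  have hlogn : 0 ≤ Real.log n := Real.log_nonneg hn1
  have hL0 : 0 ≤ L := by
    apply div_nonneg _ (by positivity)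
    have : (0:ℝ) ≤ 4 * m ^ 2 * c ^ 2 := by positivity
    exact mul_nonneg this hlogn
  set T : Fin m → ℕ → ℕ :=
    fun i t => ((Finset.Icc 1 t).filter (fun s => i ∈ Ssel s)).card with hTdef
  set A : Fin m → Finset ℕ :=
    fun i => (Finset.Icc (m + 1) n).filter
      (fun t => i ∈ Ssel t ∧ ((T i (t - 1) : ℝ) ≤ L)) with hAdef
  set bad : Finset ℕ := (Finset.Icc (m + 1) n).filter
      (fun t => ∑ i ∈ Ssel t, g t i < ∑ i ∈ Sstar t, g t i) with hbaddef
  -- Step 1: every bad round belongs to some A i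
  have hkey : ∀ t ∈ bad, ∃ i : Fin m, t ∈ A i := by
    intro t ht
    rw [hbaddef, Finset.mem_filter, Finset.mem_Icc] at ht
    obtain ⟨⟨hmt', htn⟩, hbadt⟩ := ht
    have hmt : m < t := by omega
    have ht1 : 1 ≤ t := by omega
    -- the radius function
    set r : Fin m → ℝ := fun i => 2 * c * Real.sqrt (Real.log t / (T i (t - 1) : ℝ)) with hrdef
    have h1 : ∑ i ∈ Sstar t, g t i ≤ ∑ i ∈ Sstar t, u t i :=
      Finset.sum_le_sum fun i _ => (hconf t hmt htn i).1
    have h2 : ∑ i ∈ Sstar t, u t i ≤ ∑ i ∈ Ssel t, u t i :=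
      hargmax t hmt htn _ (hstar_mem t)
    have h3 : ∑ i ∈ Ssel t, u t i ≤ ∑ i ∈ Ssel t, (g t i + r i) :=
      Finset.sum_le_sum fun i _ => (hconf t hmt htn i).2
    have hsplit : ∑ i ∈ Ssel t, (g t i + r i)
        = ∑ i ∈ Ssel t, g t i + ∑ i ∈ Ssel t, r i := Finset.sum_add_distrib
    have hgapt : Δ ≤ ∑ i ∈ Sstar t, g t i - ∑ i ∈ Ssel t, g t i :=
      hgap t hmt htn _ (hsel_mem t) hbadt
    have hsum : Δ ≤ ∑ i ∈ Ssel t, r i := by linarith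
    have hne : (Ssel t).Nonempty := by
      by_contra h
      rw [Finset.not_nonempty_iff_eq_empty] at h
      rw [h, Finset.sum_empty] at hsum; linarith
    obtain ⟨i, hiS, hi⟩ : ∃ i ∈ Ssel t, Δ / m ≤ r i := by
      by_contra h
      push_neg at h
      have hlt := Finset.sum_lt_sum_of_nonempty hne h
      rw [Finset.sum_const, nsmul_eq_mul] at hlt
      have hcard' : ((Ssel t).card : ℝ) ≤ m := by
        exact_mod_cast hcard _ (hsel_mem t)
      have hΔm : 0 < Δ / m := by positivity
      have hmul : ((Ssel t).card : ℝ) * (Δ / m) ≤ (m:ℝ) * (Δ / m) :=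
        mul_le_mul_of_nonneg_right hcard' hΔm.le
      have : (m:ℝ) * (Δ / m) = Δ := by field_simp
      linarith
    refine ⟨i, ?_⟩
    -- bound T i (t-1)
    have hTpos : 0 < T i (t - 1) := by
      obtain ⟨s0, hs01, hs0m, hs0i⟩ := hinit i
      have : s0 ∈ (Finset.Icc 1 (t - 1)).filter (fun s => i ∈ Ssel s) := by
        rw [Finset.mem_filter, Finset.mem_Icc]
        exact ⟨⟨hs01, by omega⟩, hs0i⟩
      exact Finset.card_pos.mpr ⟨s0, this⟩
    have hTposR : (0:ℝ) < (T i (t - 1) : ℝ) := by exact_mod_cast hTpos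
    have hlogt : 0 ≤ Real.log t := Real.log_nonneg (by exact_mod_cast ht1)
    have hx : 0 ≤ Real.log t / (T i (t - 1) : ℝ) := div_nonneg hlogt hTposR.le
    have h2c : (0:ℝ) < 2 * c := by linarith
    have hsq : (Δ / m) / (2 * c) ≤ Real.sqrt (Real.log t / (T i (t - 1) : ℝ)) := by
      rw [div_le_iff₀ h2c]
      have : r i = Real.sqrt (Real.log t / (T i (t - 1) : ℝ)) * (2 * c) := by
        rw [hrdef]; ring
      linarith [hi, this ▸ hi]
    have hsq2 : ((Δ / m) / (2 * c)) * ((Δ / m) / (2 * c))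
        ≤ Real.log t / (T i (t - 1) : ℝ) := by
      calc ((Δ / m) / (2 * c)) * ((Δ / m) / (2 * c))
          ≤ Real.sqrt (Real.log t / (T i (t - 1) : ℝ))
            * Real.sqrt (Real.log t / (T i (t - 1) : ℝ)) :=
            mul_self_le_mul_self (by positivity) hsq
        _ = Real.log t / (T i (t - 1) : ℝ) := Real.mul_self_sqrt hx
    have hqT : ((Δ / m) / (2 * c)) * ((Δ / m) / (2 * c)) * (T i (t - 1) : ℝ)
        ≤ Real.log t := (le_div_iff₀ hTposR).mp hsq2
    have hloglog : Real.log t ≤ Real.log n :=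
      Real.log_le_log (by exact_mod_cast ht1) (by exact_mod_cast htn)
    have hTL : ((T i (t - 1) : ℝ)) ≤ L := by
      rw [hLdef, le_div_iff₀ (by positivity : (0:ℝ) < Δ ^ 2)]
      have hqval : ((Δ / m) / (2 * c)) * ((Δ / m) / (2 * c)) * (4 * (m:ℝ) ^ 2 * c ^ 2)
          = Δ ^ 2 := by
        field_simp; ring
      have h4pos : (0:ℝ) ≤ 4 * (m:ℝ) ^ 2 * c ^ 2 := by positivity
      nlinarith [mul_le_mul_of_nonneg_right hqT h4pos,
        mul_le_mul_of_nonneg_right hloglog h4pos]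
    rw [hAdef]
    simp only [Finset.mem_filter, Finset.mem_Icc]
    exact ⟨⟨by omega, htn⟩, hiS, hTL⟩
  -- Step 2: each A i has at most L elements
  have hstep2 : ∀ i : Fin m, ((A i).card : ℝ) ≤ L := by
    intro i
    rcases (A i).eq_empty_or_nonempty with h | h
    · simp [h, hL0]
    · set t := (A i).max' h with htdef
      have htA : t ∈ A i := Finset.max'_mem _ h
      have htA' := htA
      rw [hAdef, Finset.mem_filter, Finset.mem_Icc] at htA'
      obtain ⟨⟨hmt', htn⟩, hiSel, hTle⟩ := htA'
      obtain ⟨s0, hs01, hs0m, hs0i⟩ := hinit i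
      have hs0notin : s0 ∉ (A i).erase t := by
        intro hmem
        have hmem' := Finset.mem_of_mem_erase hmem
        rw [hAdef, Finset.mem_filter, Finset.mem_Icc] at hmem'
        omega
      have hsub : insert s0 ((A i).erase t)
          ⊆ (Finset.Icc 1 (t - 1)).filter (fun s => i ∈ Ssel s) := by
        intro s hs
        rw [Finset.mem_filter, Finset.mem_Icc]
        rcases Finset.mem_insert.mp hs with rfl | hs'
        · exact ⟨⟨hs01, by omega⟩, hs0i⟩
        · have hsne := (Finset.mem_erase.mp hs').1
          have hsA := Finset.mem_of_mem_erase hs'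
          have hsmax : s ≤ t := Finset.le_max' _ _ hsA
          have hsA' := hsA
          rw [hAdef, Finset.mem_filter, Finset.mem_Icc] at hsA'
          exact ⟨⟨by omega, by omega⟩, hsA'.2.1⟩
      have hcards : (A i).card ≤ T i (t - 1) := by
        have hc1 := Finset.card_le_card hsub
        rw [Finset.card_insert_of_notMem hs0notin, Finset.card_erase_of_mem htA] at hc1
        have hpos : 0 < (A i).card := Finset.card_pos.mpr h
        have hTeq : T i (t - 1)
            = ((Finset.Icc 1 (t - 1)).filter (fun s => i ∈ Ssel s)).card := rfl
        omega
      exact le_trans (by exact_mod_cast hcards) hTle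
  -- Assemble
  have hsubset : bad ⊆ Finset.univ.biUnion A := by
    intro t ht
    obtain ⟨i, hi⟩ := hkey t ht
    exact Finset.mem_biUnion.mpr ⟨i, Finset.mem_univ i, hi⟩
  calc ((bad.card : ℝ))
      ≤ ((Finset.univ.biUnion A).card : ℝ) := by
        exact_mod_cast Finset.card_le_card hsubset
    _ ≤ ∑ i : Fin m, ((A i).card : ℝ) := by
        exact_mod_cast Finset.card_biUnion_le
    _ ≤ ∑ _i : Fin m, L := Finset.sum_le_sum fun i _ => hstep2 i
    _ = m * L := by simp [Finset.sum_const, Finset.card_univ, mul_comm]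
    _ ≤ m * (L + 1) := by nlinarith [hmR]
end

section
/- Suppose at round t all upper confidence bounds are valid and a bad round occurs: that is, there are g, u : {1,…,m} → ℝ, counts T_i ≥ 1 for i in the selected set S ⊆ {1,…,m} with |S| ≤ m, a constant c > 0, and a time index t ≤ n with n ≥ 2, such that g_i ≤ u_i ≤ g_i + 2c·√(log t / T_i) for all i ∈ S, u_j ≥ g_j for all j in an optimal set S*, ∑_{i∈S} u_i ≥ ∑_{j∈S*} u_j, and ∑_{j∈S*} g_j − ∑_{i∈S} g_i ≥ Δ > 0. Then min_{i∈S} T_i ≤ 4m²c²·log(n)/Δ². In words: when the confidence bounds hold, a suboptimal super-arm with gap at least Δ can only be selected if some chosen arm has been played at most 4m²c²·log(n)/Δ² times. -/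
/-- **Intermediate inequality of Proposition 2.** When all confidence bounds hold and a bad
super-arm `S` with suboptimality gap at least `Δ` is nevertheless selected by the
index-maximizing policy, some chosen arm must have small play count:
`min_{i∈S} T_i ≤ 4 m² c² log n / Δ²`. -/
theorem bad_round_forces_small_count
    (m n t : ℕ) (hm : 0 < m) (hn : 2 ≤ n) (ht : t ≤ n)
    (c Δ : ℝ) (hc : 0 < c) (hΔ : 0 < Δ)
    (g u : Fin m → ℝ) (T : Fin m → ℕ)
    (S Sstar : Finset (Fin m)) (hS : S.Nonempty) (hScard : S.card ≤ m)
    (hT : ∀ i ∈ S, 1 ≤ T i)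
    (hconf : ∀ i ∈ S, g i ≤ u i ∧
      u i ≤ g i + 2 * c * Real.sqrt (Real.log t / (T i : ℝ)))
    (hvalid : ∀ j ∈ Sstar, g j ≤ u j)
    (hsel : ∑ j ∈ Sstar, u j ≤ ∑ i ∈ S, u i)
    (hgap : Δ ≤ ∑ j ∈ Sstar, g j - ∑ i ∈ S, g i) :
    ((S.inf' hS T : ℕ) : ℝ) ≤ 4 * m ^ 2 * c ^ 2 * Real.log n / Δ ^ 2 := by
  set K : ℕ := S.inf' hS T with hK
  have hK1 : 1 ≤ K := Finset.le_inf' hS T hT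
  have hKpos : (0 : ℝ) < (K : ℝ) := by exact_mod_cast hK1
  have hlogn : 0 ≤ Real.log n := by
    apply Real.log_nonneg; exact_mod_cast Nat.one_le_of_lt hn
  have hlogt0 : 0 ≤ Real.log t := by
    rcases Nat.eq_zero_or_pos t with h | h
    · simp [h]
    · apply Real.log_nonneg; exact_mod_cast h
  have hlogt : Real.log t ≤ Real.log n := by
    rcases Nat.eq_zero_or_pos t with h | h
    · simp [h, hlogn]
    · apply Real.log_le_log (by exact_mod_cast h) (by exact_mod_cast ht)
  set r : ℝ := Real.sqrt (Real.log n / (K : ℝ)) with hr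
  -- key chain: Δ ≤ ∑_S (u - g) ≤ |S| * 2 c r ≤ m * 2 c r
  have hterm : ∀ i ∈ S, u i - g i ≤ 2 * c * r := by
    intro i hi
    have hTi : (1 : ℝ) ≤ (T i : ℝ) := by exact_mod_cast hT i hi
    have hKTi : (K : ℝ) ≤ (T i : ℝ) := by exact_mod_cast Finset.inf'_le T hi
    have hdiv : Real.log t / (T i : ℝ) ≤ Real.log n / (K : ℝ) :=
      div_le_div₀ hlogn hlogt hKpos hKTi
    have hsq : Real.sqrt (Real.log t / (T i : ℝ)) ≤ r :=
      Real.sqrt_le_sqrt hdiv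
    have := (hconf i hi).2
    nlinarith [hc.le]
  have hsum : Δ ≤ ∑ i ∈ S, (u i - g i) := by
    have h1 : ∑ j ∈ Sstar, g j ≤ ∑ j ∈ Sstar, u j :=
      Finset.sum_le_sum hvalid
    have : ∑ i ∈ S, (u i - g i) = ∑ i ∈ S, u i - ∑ i ∈ S, g i :=
      Finset.sum_sub_distrib _ _
    linarith
  have hbound : Δ ≤ (m : ℝ) * (2 * c * r) := by
    have h2 : ∑ i ∈ S, (u i - g i) ≤ (S.card : ℝ) * (2 * c * r) := by
      calc ∑ i ∈ S, (u i - g i) ≤ ∑ _i ∈ S, (2 * c * r) :=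
            Finset.sum_le_sum hterm
        _ = (S.card : ℝ) * (2 * c * r) := by
            rw [Finset.sum_const, nsmul_eq_mul]
    have hr0 : 0 ≤ r := Real.sqrt_nonneg _
    have hcard : (S.card : ℝ) ≤ (m : ℝ) := by exact_mod_cast hScard
    have : (S.card : ℝ) * (2 * c * r) ≤ (m : ℝ) * (2 * c * r) := by
      apply mul_le_mul_of_nonneg_right hcard; positivity
    linarith
  have hr2 : r ^ 2 = Real.log n / (K : ℝ) := by
    rw [hr, Real.sq_sqrt (by positivity)]
  have hmain : (K : ℝ) * Δ ^ 2 ≤ 4 * m ^ 2 * c ^ 2 * Real.log n := by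
    have hsq2 : Δ ^ 2 ≤ ((m : ℝ) * (2 * c * r)) ^ 2 := by
      have hr0 : 0 ≤ r := Real.sqrt_nonneg _
      nlinarith
    have hexp : ((m : ℝ) * (2 * c * r)) ^ 2 = 4 * m ^ 2 * c ^ 2 * (Real.log n / (K : ℝ)) := by
      ring_nf
      rw [hr2]; ring
    rw [hexp] at hsq2
    have := mul_le_mul_of_nonneg_left hsq2 hKpos.le
    calc (K : ℝ) * Δ ^ 2 ≤ (K : ℝ) * (4 * m ^ 2 * c ^ 2 * (Real.log n / (K : ℝ))) := this
      _ = 4 * m ^ 2 * c ^ 2 * Real.log n := by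
          field_simp
  rw [le_div_iff₀ (by positivity)]
  linarith
end

section
/- Deterministic bad-round bound for full-feedback combinatorial UCB (core of Corollary 1 on the event that all confidence bounds hold). Let m ≤ n be positive integers, c > 0, and let 𝒮 be a nonempty family of subsets of {1,…,m}. Let r : (ℝ^m) × 𝒮 → ℝ be monotone (g ≤ g' pointwise implies r(g,S) ≤ r(g',S) for all S) and boundedly smooth with strictly increasing modulus F : [0,∞) → [0,∞) (|r(g,S) − r(g',S)| ≤ F(Λ) whenever max_{i∈S}|g_i − g'_i| ≤ Λ). For each round t ∈ {1,…,n} let g_t ∈ ℝ^m and S*_t ∈ argmax_{S∈𝒮} r(g_t, S). Suppose selections S_t ∈ 𝒮 are made so that every arm is played at least once during the first m rounds and for every t > m: (a) g_t(i) ≤ u_t(i) ≤ g_t(i) + 2c·√(log t / T_{i,t−1}) for all i, where T_{i,t} = #{s ≤ t : i ∈ S_s}; (b) S_t ∈ argmax_{S∈𝒮} r(u_t, S); and (c) every suboptimal S ∈ 𝒮 satisfies r(g_t, S*_t) − r(g_t, S) ≥ Δ̄ > 0, where Δ̄ = F(b) for some b > 0. Then the number of rounds t ∈ {m+1,…,n}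 in which a suboptimal super-arm is selected is at most m·(4c²·log(n)/b² + 1). -/
open scoped Classical

/-- **Deterministic bad-round bound for full-feedback combinatorial UCB (core of
Corollary 1).** Under monotonicity and bounded smoothness of the total reward `r` with a
strictly increasing modulus `F`, valid UCB indices with radii `2c√(log t / T_{i,t-1})`,
index-maximizing selections, and minimal gap `Δ̄ = F b` with `b > 0`, the number of bad
rounds among `t ∈ {m+1,…,n}` is at most `m * (4 c² log n / b² + 1)`. -/
theorem cobrah_ff_bad_rounds_bound
    (m n : ℕ) (hm : 0 < m) (hmn : m ≤ n) (c : ℝ) (hc : 0 < c)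
    (𝒮 : Finset (Finset (Fin m))) (h𝒮 : 𝒮.Nonempty)
    (r : (Fin m → ℝ) → Finset (Fin m) → ℝ)
    (hmono : ∀ g g' : Fin m → ℝ, (∀ i, g i ≤ g' i) → ∀ S ∈ 𝒮, r g S ≤ r g' S)
    (F : ℝ → ℝ) (hFmono : StrictMonoOn F (Set.Ici (0 : ℝ)))
    (hFnonneg : ∀ x : ℝ, 0 ≤ x → 0 ≤ F x)
    (hsmooth : ∀ (g g' : Fin m → ℝ) (S : Finset (Fin m)) (Λ : ℝ), 0 ≤ Λ →
      (∀ i ∈ S, |g i - g' i| ≤ Λ) → |r g S - r g' S| ≤ F Λ)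
    (g u : ℕ → Fin m → ℝ) (Sstar Ssel : ℕ → Finset (Fin m))
    (hstar_mem : ∀ t, Sstar t ∈ 𝒮)
    (hstar_opt : ∀ t, ∀ S ∈ 𝒮, r (g t) S ≤ r (g t) (Sstar t))
    (hsel_mem : ∀ t, Ssel t ∈ 𝒮)
    (hinit : ∀ i : Fin m, ∃ s, 1 ≤ s ∧ s ≤ m ∧ i ∈ Ssel s)
    (b Δbar : ℝ) (hb : 0 < b) (hΔbar : Δbar = F b) (hΔbarpos : 0 < Δbar)
    (hconf : ∀ t, m < t → t ≤ n → ∀ i : Fin m,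
      g t i ≤ u t i ∧
        u t i ≤ g t i + 2 * c * Real.sqrt (Real.log t /
          (((Finset.Icc 1 (t - 1)).filter (fun s => i ∈ Ssel s)).card : ℝ)))
    (hargmax : ∀ t, m < t → t ≤ n → ∀ S ∈ 𝒮, r (u t) S ≤ r (u t) (Ssel t))
    (hgap : ∀ t, m < t → t ≤ n → ∀ S ∈ 𝒮,
      r (g t) S < r (g t) (Sstar t) → Δbar ≤ r (g t) (Sstar t) - r (g t) S) :
    (((Finset.Icc (m + 1) n).filter
        (fun t => r (g t) (Ssel t) < r (g t) (Sstar t))).card : ℝ)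
      ≤ m * (4 * c ^ 2 * Real.log n / b ^ 2 + 1) := by

  set T : Fin m → ℕ → ℕ :=
    fun i s => ((Finset.Icc 1 s).filter (fun q => i ∈ Ssel q)).card with hT
  set L : ℝ := 4 * c ^ 2 * Real.log n / b ^ 2 with hL
  have hn1 : (1 : ℝ) ≤ (n : ℝ) := by exact_mod_cast le_trans hm hmn
  have hlogn : 0 ≤ Real.log n := Real.log_nonneg hn1
  have hLnonneg : 0 ≤ L := by
    apply div_nonneg _ (by positivity)
    positivity
  -- every arm has been played once by round m
  have hT1 : ∀ (i : Fin m) (t : ℕ), m ≤ t → 1 ≤ T i t := by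
    intro i t ht
    obtain ⟨s, hs1, hsm, hmem⟩ := hinit i
    have : s ∈ (Finset.Icc 1 t).filter (fun q => i ∈ Ssel q) := by
      simp only [Finset.mem_filter, Finset.mem_Icc]
      exact ⟨⟨hs1, le_trans hsm ht⟩, hmem⟩
    simpa [hT] using Finset.card_pos.mpr ⟨s, this⟩
  -- strict monotonicity of play counts along rounds where arm i is played
  have hTmono : ∀ (i : Fin m) (t t' : ℕ), 1 ≤ t → t < t' → i ∈ Ssel t →
      T i (t - 1) < T i (t' - 1) := by
    intro i t t' ht1 htt' hmem
    apply Finset.card_lt_card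
    rw [Finset.ssubset_iff_of_subset]
    · exact ⟨t, by
        simp only [Finset.mem_filter, Finset.mem_Icc]
        exact ⟨⟨⟨ht1, Nat.le_sub_one_of_lt htt'⟩, hmem⟩, fun h =>
          absurd h.1.2 (by omega)⟩⟩
    · apply Finset.filter_subset_filter
      exact Finset.Icc_subset_Icc_right (by omega)
  -- key claim: on a bad round, some selected arm has small count
  have key : ∀ t, m < t → t ≤ n → r (g t) (Ssel t) < r (g t) (Sstar t) →
      ∃ i ∈ Ssel t, (T i (t - 1) : ℝ) ≤ L := by
    intro t hmt htn hbad
    by_contra hcon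
    push_neg at hcon
    have ht2 : (2 : ℝ) ≤ (t : ℝ) := by exact_mod_cast (by omega : 2 ≤ t)
    have hlogt : 0 < Real.log t := Real.log_pos (by linarith)
    have hlogtn : Real.log t ≤ Real.log n := by
      apply Real.log_le_log (by linarith)
      exact_mod_cast htn
    set rad : Fin m → ℝ :=
      fun i => 2 * c * Real.sqrt (Real.log t / (T i (t - 1) : ℝ)) with hrad
    set Λ : ℝ := (Ssel t).fold max 0 rad with hΛ
    have hradnonneg : ∀ i, 0 ≤ rad i := by
      intro i; positivity
    have hradlt : ∀ i ∈ Ssel t, rad i < b := by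
      intro i hi
      have hLlt := hcon i hi
      have hTpos : (0 : ℝ) < (T i (t - 1) : ℝ) := lt_of_le_of_lt hLnonneg hLlt
      have hTgt : 4 * c ^ 2 * Real.log t / b ^ 2 < (T i (t - 1) : ℝ) := by
        apply lt_of_le_of_lt _ hLlt
        rw [hL]
        apply div_le_div_of_nonneg_right _ (by positivity)
        nlinarith
      have hTgt' : 4 * c ^ 2 * Real.log t < (T i (t - 1) : ℝ) * b ^ 2 := by
        rw [div_lt_iff₀ (by positivity)] at hTgt
        linarith
      have h1 : Real.log t / (T i (t - 1) : ℝ) < (b / (2 * c)) ^ 2 := by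
        rw [div_lt_iff₀ hTpos, div_pow, div_mul_eq_mul_div,
          lt_div_iff₀ (by positivity)]
        nlinarith [hTgt']
      have h2 : Real.sqrt (Real.log t / (T i (t - 1) : ℝ)) < b / (2 * c) :=
        (Real.sqrt_lt' (by positivity)).mpr h1
      rw [hrad]
      calc 2 * c * Real.sqrt (Real.log t / (T i (t - 1) : ℝ))
          < 2 * c * (b / (2 * c)) := by
            apply mul_lt_mul_of_pos_left h2 (by positivity)
        _ = b := by field_simp
    have hΛnonneg : 0 ≤ Λ := by
      rw [hΛ]
      exact (Finset.le_fold_max 0).mpr (Or.inl le_rfl)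
    have hΛlt : Λ < b := by
      rw [hΛ, Finset.fold_max_lt]
      exact ⟨hb, hradlt⟩
    have hradleΛ : ∀ i ∈ Ssel t, rad i ≤ Λ := by
      intro i hi
      rw [hΛ]
      exact (Finset.le_fold_max (rad i)).mpr (Or.inr ⟨i, hi, le_rfl⟩)
    -- the UCB chain
    have hgu : ∀ i, g t i ≤ u t i := fun i => (hconf t hmt htn i).1
    have hchain1 : r (g t) (Sstar t) ≤ r (u t) (Sstar t) :=
      hmono (g t) (u t) hgu (Sstar t) (hstar_mem t)
    have hchain2 : r (u t) (Sstar t) ≤ r (u t) (Ssel t) :=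
      hargmax t hmt htn (Sstar t) (hstar_mem t)
    have hchain3 : r (u t) (Ssel t) - r (g t) (Ssel t) ≤ F Λ := by
      have := hsmooth (u t) (g t) (Ssel t) Λ hΛnonneg ?_
      · exact le_trans (le_abs_self _) this
      · intro i hi
        rw [abs_sub_le_iff]
        constructor
        · calc u t i - g t i ≤ 2 * c * Real.sqrt (Real.log t /
              (((Finset.Icc 1 (t - 1)).filter (fun s => i ∈ Ssel s)).card : ℝ)) := by
                linarith [(hconf t hmt htn i).2]
            _ = rad i := by rw [hrad, hT]
            _ ≤ Λ := hradleΛ i hi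
        · linarith [hgu i, hΛnonneg]
    have hFΛ : F Λ < F b := hFmono (Set.mem_Ici.mpr hΛnonneg)
      (Set.mem_Ici.mpr (le_of_lt hb)) hΛlt
    have hgapt : Δbar ≤ r (g t) (Sstar t) - r (g t) (Ssel t) :=
      hgap t hmt htn (Ssel t) (hsel_mem t) hbad
    rw [hΔbar] at hgapt
    linarith
  -- per-arm bad-round sets
  set B : Fin m → Finset ℕ := fun i => (Finset.Icc (m + 1) n).filter
    (fun t => i ∈ Ssel t ∧ (T i (t - 1) : ℝ) ≤ L) with hB
  have hsubset : (Finset.Icc (m + 1) n).filter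
      (fun t => r (g t) (Ssel t) < r (g t) (Sstar t))
      ⊆ Finset.univ.biUnion B := by
    intro t ht
    simp only [Finset.mem_filter, Finset.mem_Icc] at ht
    obtain ⟨⟨hmt, htn⟩, hbad⟩ := ht
    obtain ⟨i, hi, hle⟩ := key t (by omega) htn hbad
    simp only [Finset.mem_biUnion, Finset.mem_univ, hB, Finset.mem_filter,
      Finset.mem_Icc]
    exact ⟨i, trivial, ⟨hmt, htn⟩, hi, hle⟩
  have hcardB : ∀ i, (B i).card ≤ ⌊L⌋₊ := by
    intro i
    have : (B i).card ≤ (Finset.Icc 1 ⌊L⌋₊).card := by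
      apply Finset.card_le_card_of_injOn (fun t => T i (t - 1))
      · intro t ht
        simp only [hB, Finset.coe_filter, Set.mem_setOf_eq, Finset.mem_filter, Finset.mem_Icc] at ht
        obtain ⟨⟨hmt, htn⟩, hmem, hle⟩ := ht
        simp only [Finset.coe_Icc, Set.mem_Icc, Finset.mem_Icc]
        exact ⟨hT1 i (t - 1) (by omega), Nat.le_floor hle⟩
      · intro t ht t' ht' heq
        simp only [hB, Finset.coe_filter, Set.mem_setOf_eq,
          Finset.mem_Icc] at ht ht'
        obtain ⟨⟨hmt, htn⟩, hmem, -⟩ := ht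
        obtain ⟨⟨hmt', htn'⟩, hmem', -⟩ := ht'
        by_contra hne
        rcases lt_or_gt_of_ne hne with h | h
        · exact absurd heq (Nat.ne_of_lt (hTmono i t t' (by omega) h hmem))
        · exact absurd heq.symm
            (Nat.ne_of_lt (hTmono i t' t (by omega) h hmem'))
    simpa using this
  calc (((Finset.Icc (m + 1) n).filter
        (fun t => r (g t) (Ssel t) < r (g t) (Sstar t))).card : ℝ)
      ≤ ((Finset.univ.biUnion B).card : ℝ) := by
        exact_mod_cast Finset.card_le_card hsubset
    _ ≤ (∑ i : Fin m, (B i).card : ℝ) := by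
        exact_mod_cast Finset.card_biUnion_le
    _ ≤ ∑ i : Fin m, (⌊L⌋₊ : ℝ) := by
        apply Finset.sum_le_sum
        intro i _
        exact_mod_cast hcardB i
    _ = m * (⌊L⌋₊ : ℝ) := by simp [mul_comm]
    _ ≤ m * L := by
        apply mul_le_mul_of_nonneg_left (Nat.floor_le hLnonneg)
          (by positivity)
    _ ≤ m * (L + 1) := by
        apply mul_le_mul_of_nonneg_left (by linarith) (by positivity)
    _ = m * (4 * c ^ 2 * Real.log n / b ^ 2 + 1) := by rw [hL]
end
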